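/- Degree bound on the unimodular multiplier: with A, U, H as in the Hermite decomposition U·A = H of a full-row-rank matrix A ∈ S^{n×n} with deg_D A_{ij} ≤ d, every entry of U satisfies deg_D U_{ij} ≤ (n−1)d. -/

import Mathlib

/-- Abstract presentation of a skew (Ore/differential) polynomial ring `S = K[D; δ]`:
`S` is a ring containing `K` via `ι`, with a distinguished element `D` satisfying the
commutation rule `D * a = a * D + δ a`, and every element of `S` is (uniquely) a finite
sum `∑ aₙ Dⁿ`, with coefficients `coeff` supported on `supp`. -/
structure DiffPolyRing (K : Type) [CommRing K] (S : Type) [Ring S] (δ : K → K) where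
  ι : K →+* S
  D : S
  comm_rule : ∀ a : K, D * ι a = ι a * D + ι (δ a)
  coeff : S → ℕ → K
  supp : S → Finset ℕ
  mem_supp : ∀ f n, n ∈ supp f ↔ coeff f n ≠ 0
  coeff_add : ∀ f g n, coeff (f + g) n = coeff f n + coeff g n
  coeff_ext : ∀ f g : S, (∀ n, coeff f n = coeff g n) → f = g
  coeff_monomial : ∀ (a : K) (i n : ℕ), coeff (ι a * D ^ i) n = if n = i then a else 0
  repr_sum : ∀ f : S, f = ∑ n ∈ supp f, ι (coeff f n) * D ^ n

namespace DiffPolyRing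

variable {K S : Type} [CommRing K] [Ring S] {δ : K → K}

/-- Degree in the variable `D`, with `degD 0 = ⊥` (i.e. `-∞`). -/
noncomputable def degD (R : DiffPolyRing K S δ) (f : S) : WithBot ℕ := (R.supp f).max

/-- Degree in `D` as a natural number (`0` for the zero polynomial). -/
noncomputable def natDegD (R : DiffPolyRing K S δ) (f : S) : ℕ := WithBot.unbotD 0 (R.degD f)

/-- `f` is monic: its leading coefficient (in `D`) is `1`. -/
noncomputable def Monic (R : DiffPolyRing K S δ) (f : S) : Prop :=
  R.coeff f (R.natDegD f) = 1

/-- `H` is in Hermite form: upper triangular, monic diagonal entries, and each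
off-diagonal entry has `D`-degree strictly less than the diagonal entry below it. -/
noncomputable def HermiteForm (R : DiffPolyRing K S δ) {n : ℕ}
    (H : Matrix (Fin n) (Fin n) S) : Prop :=
  (∀ i j, j < i → H i j = 0) ∧ (∀ i, R.Monic (H i i)) ∧
    (∀ i j, i < j → R.degD (H i j) < R.degD (H j j))

/-- The rows of `A` are left `S`-linearly independent. -/
def FullRowRank {n : ℕ} (A : Matrix (Fin n) (Fin n) S) : Prop :=
  ∀ c : Fin n → S, (∀ j, (∑ i, c i * A i j) = 0) → c = 0


variable (R : DiffPolyRing K S δ)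

lemma coeff_zero (n : ℕ) : R.coeff 0 n = 0 := by
  have h := R.coeff_add 0 0 n
  simpa using h.symm

lemma coeff_sum {α : Type} (s : Finset α) (f : α → S) (n : ℕ) :
    R.coeff (∑ a ∈ s, f a) n = ∑ a ∈ s, R.coeff (f a) n := by
  classical
  induction s using Finset.induction_on with
  | empty => simpa using R.coeff_zero n
  | insert a s' h ih => rw [Finset.sum_insert h, Finset.sum_insert h, R.coeff_add, ih]

lemma coeff_neg (f : S) (n : ℕ) : R.coeff (-f) n = - R.coeff f n := by
  have h : R.coeff f n + R.coeff (-f) n = 0 := by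
    rw [← R.coeff_add]; simp [R.coeff_zero]
  exact eq_neg_of_add_eq_zero_right h

lemma coeff_sub (f g : S) (n : ℕ) : R.coeff (f - g) n = R.coeff f n - R.coeff g n := by
  rw [sub_eq_add_neg, R.coeff_add, R.coeff_neg]; ring

lemma eq_zero_of_coeff (f : S) (h : ∀ n, R.coeff f n = 0) : f = 0 :=
  R.coeff_ext f 0 (fun n => by rw [h, R.coeff_zero])

lemma degD_le_iff (f : S) (t : ℕ) :
    R.degD f ≤ (t : WithBot ℕ) ↔ ∀ i : ℕ, t < i → R.coeff f i = 0 := by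
  constructor
  · intro h i hi
    by_contra hne
    have hmem : i ∈ R.supp f := (R.mem_supp f i).2 hne
    have h2 := Finset.le_max hmem
    have h3 : (i : WithBot ℕ) ≤ (t : WithBot ℕ) := le_trans h2 h
    exact absurd (WithBot.coe_le_coe.1 h3) (not_le.2 hi)
  · intro h
    refine Finset.max_le ?_
    intro i hi
    have hne := (R.mem_supp f i).1 hi
    rcases le_or_gt i t with hle | hlt
    · exact WithBot.coe_le_coe.2 hle
    · exact absurd (h i hlt) hne

lemma degD_zero_le (t : ℕ) : R.degD (0 : S) ≤ (t : WithBot ℕ) :=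
  (R.degD_le_iff 0 t).2 (fun i _ => R.coeff_zero i)

lemma repr_le (f : S) (t : ℕ) (h : R.degD f ≤ (t : WithBot ℕ)) :
    f = ∑ i ∈ Finset.range (t + 1), R.ι (R.coeff f i) * R.D ^ i := by
  classical
  have hsub : R.supp f ⊆ Finset.range (t + 1) := by
    intro i hi
    have hne := (R.mem_supp f i).1 hi
    rcases le_or_gt i t with hle | hlt
    · exact Finset.mem_range.2 (Nat.lt_succ_of_le hle)
    · exact absurd ((R.degD_le_iff f t).1 h i hlt) hne
  conv_lhs => rw [R.repr_sum f]
  refine Finset.sum_subset hsub ?_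
  intro i _ hnot
  have hc : R.coeff f i = 0 := by
    by_contra hne
    exact hnot ((R.mem_supp f i).2 hne)
  rw [hc, map_zero, zero_mul]

lemma coeff_smul (a : K) (f : S) (n : ℕ) : R.coeff (R.ι a * f) n = a * R.coeff f n := by
  classical
  conv_lhs => rw [R.repr_sum f, Finset.mul_sum]
  rw [R.coeff_sum]
  have hterm : ∀ i ∈ R.supp f,
      R.coeff (R.ι a * (R.ι (R.coeff f i) * R.D ^ i)) n = if n = i then a * R.coeff f i else 0 := by
    intro i _
    rw [← mul_assoc, ← map_mul, R.coeff_monomial]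
  rw [Finset.sum_congr rfl hterm]
  by_cases hm : n ∈ R.supp f
  · rw [Finset.sum_eq_single n (fun b _ hb => by simp [Ne.symm hb]) (fun h => absurd hm h)]
    simp
  · have hc : R.coeff f n = 0 := by
      by_contra hne; exact hm ((R.mem_supp f n).2 hne)
    rw [hc, mul_zero]
    refine Finset.sum_eq_zero ?_
    intro b hb
    rcases eq_or_ne n b with rfl | hne
    · exact absurd hb hm
    · simp [hne]

lemma coeff_iota (a : K) (n : ℕ) : R.coeff (R.ι a) n = if n = 0 then a else 0 := by
  have h := R.coeff_monomial a 0 n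
  simpa using h

lemma mul_Dpow (f : S) (t j : ℕ) (h : R.degD f ≤ (t : WithBot ℕ)) :
    R.degD (f * R.D ^ j) ≤ ((t + j : ℕ) : WithBot ℕ) ∧
      R.coeff (f * R.D ^ j) (t + j) = R.coeff f t := by
  classical
  have hexp : f * R.D ^ j =
      ∑ i ∈ Finset.range (t + 1), R.ι (R.coeff f i) * R.D ^ (i + j) := by
    conv_lhs => rw [R.repr_le f t h]
    rw [Finset.sum_mul]
    refine Finset.sum_congr rfl ?_
    intro i _
    rw [mul_assoc, pow_add]
  have hco : ∀ r : ℕ, R.coeff (f * R.D ^ j) r =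
      ∑ i ∈ Finset.range (t + 1), (if r = i + j then R.coeff f i else 0) := by
    intro r
    rw [hexp, R.coeff_sum]
    exact Finset.sum_congr rfl (fun i _ => R.coeff_monomial _ _ _)
  constructor
  · rw [R.degD_le_iff]
    intro r hr
    rw [hco]
    refine Finset.sum_eq_zero ?_
    intro i hi
    have : i + j < r := by
      have := Finset.mem_range.1 hi; omega
    simp [Nat.ne_of_gt this]
  · rw [hco]
    rw [Finset.sum_eq_single t (fun i hi hne => by
        have hx : t + j ≠ i + j := by
          intro hh; exact hne (by omega)
        simp [hx, Ne.symm hne])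
      (fun hnot => absurd (Finset.self_mem_range_succ t) hnot)]
    simp

lemma D_mul (f : S) (t : ℕ) (h : R.degD f ≤ (t : WithBot ℕ)) :
    R.degD (R.D * f) ≤ ((t + 1 : ℕ) : WithBot ℕ) ∧
      R.coeff (R.D * f) (t + 1) = R.coeff f t := by
  classical
  have hexp : R.D * f = ∑ i ∈ Finset.range (t + 1),
      (R.ι (R.coeff f i) * R.D ^ (i + 1) + R.ι (δ (R.coeff f i)) * R.D ^ i) := by
    conv_lhs => rw [R.repr_le f t h]
    rw [Finset.mul_sum]
    refine Finset.sum_congr rfl ?_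
    intro i _
    rw [← mul_assoc, R.comm_rule, add_mul, mul_assoc, ← pow_succ']
  have hco : ∀ r : ℕ, R.coeff (R.D * f) r = ∑ i ∈ Finset.range (t + 1),
      ((if r = i + 1 then R.coeff f i else 0) + (if r = i then δ (R.coeff f i) else 0)) := by
    intro r
    rw [hexp, R.coeff_sum]
    refine Finset.sum_congr rfl ?_
    intro i _
    rw [R.coeff_add, R.coeff_monomial, R.coeff_monomial]
  constructor
  · rw [R.degD_le_iff]
    intro r hr
    rw [hco]
    refine Finset.sum_eq_zero ?_
    intro i hi
    have hi' := Finset.mem_range.1 hi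
    have h1 : r ≠ i + 1 := by omega
    have h2 : r ≠ i := by omega
    simp [h1, h2]
  · rw [hco]
    rw [Finset.sum_eq_single t ?_ (fun hnot => absurd (Finset.self_mem_range_succ t) hnot)]
    · simp
    · intro i hi hne
      have hi' := Finset.mem_range.1 hi
      have h1 : t + 1 ≠ i + 1 := by omega
      have h2 : t + 1 ≠ i := by omega
      simp [h1, h2, Ne.symm hne]

lemma Dpow_mul_iota (i : ℕ) (b : K) :
    R.degD (R.D ^ i * R.ι b) ≤ (i : WithBot ℕ) ∧ R.coeff (R.D ^ i * R.ι b) i = b := by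
  induction i with
  | zero =>
    rw [pow_zero, one_mul]
    constructor
    · rw [R.degD_le_iff]
      intro r hr
      rw [R.coeff_iota]
      have : r ≠ 0 := by omega
      simp [this]
    · simp [R.coeff_iota]
  | succ i ih =>
    have hre : R.D ^ (i + 1) * R.ι b = R.D * (R.D ^ i * R.ι b) := by
      rw [← mul_assoc, ← pow_succ']
    have hD := R.D_mul (R.D ^ i * R.ι b) i ih.1
    rw [hre]
    exact ⟨hD.1, by rw [hD.2, ih.2]⟩

lemma degD_smul_le (a : K) (f : S) (t : ℕ) (h : R.degD f ≤ (t : WithBot ℕ)) :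
    R.degD (R.ι a * f) ≤ (t : WithBot ℕ) := by
  rw [R.degD_le_iff]
  intro r hr
  rw [R.coeff_smul, (R.degD_le_iff f t).1 h r hr, mul_zero]

lemma coeff_mul (f g : S) (a b : ℕ) (hf : R.degD f ≤ (a : WithBot ℕ))
    (hg : R.degD g ≤ (b : WithBot ℕ)) :
    R.degD (f * g) ≤ ((a + b : ℕ) : WithBot ℕ) ∧
      R.coeff (f * g) (a + b) = R.coeff f a * R.coeff g b := by
  classical
  set T : ℕ → ℕ → S := fun i j => R.ι (R.coeff f i) * ((R.D ^ i * R.ι (R.coeff g j)) * R.D ^ j)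
    with hT
  have hexp : f * g = ∑ i ∈ Finset.range (a + 1), ∑ j ∈ Finset.range (b + 1), T i j := by
    conv_lhs => rw [R.repr_le f a hf, R.repr_le g b hg]
    rw [Finset.sum_mul]
    refine Finset.sum_congr rfl ?_
    intro i _
    rw [Finset.mul_sum]
    refine Finset.sum_congr rfl ?_
    intro j _
    rw [hT]
    simp only []
    rw [mul_assoc, ← mul_assoc (R.D ^ i)]

  have hTdeg : ∀ i j, R.degD (T i j) ≤ ((i + j : ℕ) : WithBot ℕ) := by
    intro i j
    refine R.degD_smul_le _ _ _ ?_
    exact (R.mul_Dpow _ i j (R.Dpow_mul_iota i (R.coeff g j)).1).1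
  have hTtop : ∀ i j, R.coeff (T i j) (i + j) = R.coeff f i * R.coeff g j := by
    intro i j
    rw [hT]
    simp only []
    rw [R.coeff_smul, (R.mul_Dpow _ i j (R.Dpow_mul_iota i (R.coeff g j)).1).2,
      (R.Dpow_mul_iota i (R.coeff g j)).2]
  have hTzero : ∀ i j r, i + j < r → R.coeff (T i j) r = 0 := by
    intro i j r hr
    exact (R.degD_le_iff _ _).1 (hTdeg i j) r hr
  constructor
  · rw [R.degD_le_iff]
    intro r hr
    rw [hexp, R.coeff_sum]
    refine Finset.sum_eq_zero ?_
    intro i hi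
    rw [R.coeff_sum]
    refine Finset.sum_eq_zero ?_
    intro j hj
    have hi' := Finset.mem_range.1 hi
    have hj' := Finset.mem_range.1 hj
    exact hTzero i j r (by omega)
  · rw [hexp, R.coeff_sum]
    rw [Finset.sum_eq_single a ?_ (fun hnot => absurd (Finset.self_mem_range_succ a) hnot)]
    · rw [R.coeff_sum]
      rw [Finset.sum_eq_single b ?_ (fun hnot => absurd (Finset.self_mem_range_succ b) hnot)]
      · exact hTtop a b
      · intro j hj hne
        have hj' := Finset.mem_range.1 hj
        exact hTzero a j (a + b) (by omega)
    · intro i hi hne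
      have hi' := Finset.mem_range.1 hi
      rw [R.coeff_sum]
      refine Finset.sum_eq_zero ?_
      intro j hj
      have hj' := Finset.mem_range.1 hj
      exact hTzero i j (a + b) (by omega)

lemma natDegD_spec {f : S} (h : f ≠ 0) :
    R.degD f = (R.natDegD f : WithBot ℕ) ∧ R.coeff f (R.natDegD f) ≠ 0 := by
  classical
  have hsupp : (R.supp f).Nonempty := by
    rw [Finset.nonempty_iff_ne_empty]
    intro hemp
    apply h
    rw [R.repr_sum f, hemp, Finset.sum_empty]
  have hmax : R.degD f = ((R.supp f).max' hsupp : WithBot ℕ) := by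
    rw [degD]
    exact_mod_cast (Finset.coe_max' hsupp).symm
  have hnat : R.natDegD f = (R.supp f).max' hsupp := by
    rw [natDegD, hmax]
    exact_mod_cast WithBot.unbotD_coe 0 ((R.supp f).max' hsupp)
  constructor
  · rw [hmax, hnat]
  · rw [hnat]
    exact (R.mem_supp f _).1 (Finset.max'_mem _ hsupp)

lemma degD_le_natDegD (f : S) : R.degD f ≤ (R.natDegD f : WithBot ℕ) := by
  by_cases h : f = 0
  · subst h; exact R.degD_zero_le _
  · exact le_of_eq (R.natDegD_spec h).1

lemma natDegD_le_of_degD_le {f : S} {t : ℕ} (h : R.degD f ≤ (t : WithBot ℕ)) (hf : f ≠ 0) :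
    R.natDegD f ≤ t := by
  have := (R.natDegD_spec hf).1
  rw [this] at h
  exact_mod_cast h

lemma lt_natDegD_of_not_le {f : S} {t : ℕ} (h : ¬ R.degD f ≤ (t : WithBot ℕ)) :
    f ≠ 0 ∧ t < R.natDegD f := by
  have hf : f ≠ 0 := by
    intro h0; subst h0; exact h (R.degD_zero_le t)
  refine ⟨hf, ?_⟩
  by_contra hle
  exact h (le_trans (R.degD_le_natDegD f) (by exact_mod_cast not_lt.1 hle))

lemma top_coeff_mul_ne_zero {K S : Type} [Field K] [Ring S] {δ : K → K}
    (R : DiffPolyRing K S δ) {f g : S} (hf : f ≠ 0) (hg : g ≠ 0) :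
    R.coeff (f * g) (R.natDegD f + R.natDegD g) ≠ 0 := by
  rw [(R.coeff_mul f g _ _ (R.degD_le_natDegD f) (R.degD_le_natDegD g)).2]
  exact mul_ne_zero (R.natDegD_spec hf).2 (R.natDegD_spec hg).2

lemma monic_ne_zero {K S : Type} [Field K] [Ring S] {δ : K → K}
    (R : DiffPolyRing K S δ) {f : S} (h : R.Monic f) : f ≠ 0 := by
  intro h0
  rw [Monic, h0, R.coeff_zero] at h
  exact zero_ne_one h

lemma hermite_back {K S : Type} [Field K] [Ring S] {δ : K → K}
    (R : DiffPolyRing K S δ) {n : ℕ} (Hm : Matrix (Fin n) (Fin n) S)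
    (hlow : ∀ i j, j < i → Hm i j = 0)
    (hmon : ∀ i, R.Monic (Hm i i))
    (hup : ∀ i j, i < j → R.degD (Hm i j) < R.degD (Hm j j))
    (b : Fin n → S) (t : ℕ)
    (hv : ∀ k, R.degD (∑ r, b r * Hm r k) ≤ (t : WithBot ℕ)) :
    ∀ k, R.degD (b k) ≤ (t : WithBot ℕ) := by
  classical
  suffices hN : ∀ N : ℕ, ∀ k : Fin n, (k : ℕ) = N → R.degD (b k) ≤ (t : WithBot ℕ) by
    intro k; exact hN k k rfl
  intro N
  induction N using Nat.strongRecOn with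
  | ind N ihN =>
    intro k hkN
    have ih : ∀ r : Fin n, r < k → R.degD (b r) ≤ (t : WithBot ℕ) := by
      intro r hr
      exact ihN r (hkN ▸ (Fin.lt_def.mp hr)) r rfl
    by_cases hbk : b k = 0
    · rw [hbk]; exact R.degD_zero_le t
    have hHkk : Hm k k ≠ 0 := R.monic_ne_zero (hmon k)
    set dk := R.natDegD (Hm k k) with hdk
    have hdegHkk : R.degD (Hm k k) = (dk : WithBot ℕ) := (R.natDegD_spec hHkk).1
    have hsplit : b k * Hm k k =
        (∑ r, b r * Hm r k) - ∑ r ∈ Finset.univ.erase k, b r * Hm r k := by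
      rw [eq_sub_iff_add_eq]
      exact Finset.add_sum_erase Finset.univ (fun r => b r * Hm r k) (Finset.mem_univ k)
    have hoff : ∀ r ∈ Finset.univ.erase k, ∀ i : ℕ,
        t + dk ≤ i → t < i → R.coeff (b r * Hm r k) i = 0 := by
      intro r hr i h1 h2
      have hrk : r ≠ k := Finset.ne_of_mem_erase hr
      rcases lt_or_gt_of_ne hrk with hlt | hgt
      · by_cases hz : Hm r k = 0
        · rw [hz, mul_zero]; exact R.coeff_zero i
        have hupk := hup r k hlt
        have hdegHrk : R.degD (Hm r k) = ((R.natDegD (Hm r k) : ℕ) : WithBot ℕ) :=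
          (R.natDegD_spec hz).1
        have hnd : R.natDegD (Hm r k) < dk := by
          rw [hdegHrk, hdegHkk] at hupk
          exact_mod_cast hupk
        have hprod := (R.coeff_mul (b r) (Hm r k) t (R.natDegD (Hm r k))
          (ih r hlt) (R.degD_le_natDegD _)).1
        refine (R.degD_le_iff _ _).1 hprod i ?_
        omega
      · rw [hlow r k hgt, mul_zero]
        exact R.coeff_zero i
    have hvk : ∀ i : ℕ, t + dk ≤ i → t < i → R.coeff (b k * Hm k k) i = 0 := by
      intro i h1 h2
      rw [hsplit, R.coeff_sub, (R.degD_le_iff _ _).1 (hv k) i h2, R.coeff_sum]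
      rw [Finset.sum_eq_zero (fun r hr => hoff r hr i h1 h2)]
      ring
    have htop : R.coeff (b k * Hm k k) (R.natDegD (b k) + dk) ≠ 0 :=
      R.top_coeff_mul_ne_zero hbk hHkk
    have hle : R.natDegD (b k) ≤ t := by
      by_contra hgt
      exact htop (hvk _ (by omega) (by omega))
    calc R.degD (b k) ≤ ((R.natDegD (b k) : ℕ) : WithBot ℕ) := R.degD_le_natDegD _
      _ ≤ (t : WithBot ℕ) := by exact_mod_cast hle

/-- Build an element of `S` from a coefficient tuple. -/
noncomputable def ofTuple (t : ℕ) (x : Fin (t + 1) → K) : S :=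
  ∑ i : Fin (t + 1), R.ι (x i) * R.D ^ (i : ℕ)

lemma coeff_ofTuple (t : ℕ) (x : Fin (t + 1) → K) (r : ℕ) :
    R.coeff (R.ofTuple t x) r = if h : r < t + 1 then x ⟨r, h⟩ else 0 := by
  classical
  rw [ofTuple, R.coeff_sum]
  simp only [R.coeff_monomial]
  by_cases h : r < t + 1
  · rw [dif_pos h, Finset.sum_eq_single (⟨r, h⟩ : Fin (t + 1))]
    · simp
    · intro b _ hb
      refine if_neg ?_
      intro hh
      exact hb (Fin.ext hh.symm)
    · intro hnot; exact absurd (Finset.mem_univ _) hnot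
  · rw [dif_neg h]
    refine Finset.sum_eq_zero fun b _ => if_neg ?_
    intro hh
    exact h (hh ▸ b.isLt)

lemma ofTuple_add (t : ℕ) (x y : Fin (t + 1) → K) :
    R.ofTuple t (x + y) = R.ofTuple t x + R.ofTuple t y := by
  rw [ofTuple, ofTuple, ofTuple, ← Finset.sum_add_distrib]
  refine Finset.sum_congr rfl fun i _ => ?_
  rw [Pi.add_apply, map_add, add_mul]

lemma ofTuple_smul (t : ℕ) (a : K) (x : Fin (t + 1) → K) :
    R.ofTuple t (a • x) = R.ι a * R.ofTuple t x := by
  rw [ofTuple, ofTuple, Finset.mul_sum]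
  refine Finset.sum_congr rfl fun i _ => ?_
  rw [Pi.smul_apply, smul_eq_mul, map_mul, mul_assoc]

lemma ofTuple_zero (t : ℕ) : R.ofTuple t (0 : Fin (t + 1) → K) = 0 := by
  rw [ofTuple]
  exact Finset.sum_eq_zero fun i _ => by simp

lemma degD_ofTuple (t : ℕ) (x : Fin (t + 1) → K) :
    R.degD (R.ofTuple t x) ≤ (t : WithBot ℕ) := by
  rw [R.degD_le_iff]
  intro r hr
  rw [R.coeff_ofTuple, dif_neg (by omega)]

lemma ofTuple_coeff (f : S) (t : ℕ) (h : R.degD f ≤ (t : WithBot ℕ)) :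
    R.ofTuple t (fun i => R.coeff f (i : ℕ)) = f := by
  rw [ofTuple]
  conv_rhs => rw [R.repr_le f t h]
  exact (Finset.sum_range fun i => R.ι (R.coeff f i) * R.D ^ i).symm

/-- `∑ k, ofTuple t (x k) * u k` : multiply a tuple-row by a vector of ring elements. -/
noncomputable def rowMulD {n : ℕ} (t : ℕ) (u : Fin n → S) (x : Fin n → Fin (t + 1) → K) : S :=
  ∑ k, R.ofTuple t (x k) * u k

lemma rowMulD_add {n : ℕ} (t : ℕ) (u : Fin n → S) (x y : Fin n → Fin (t + 1) → K) :
    R.rowMulD t u (x + y) = R.rowMulD t u x + R.rowMulD t u y := by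
  rw [rowMulD, rowMulD, rowMulD, ← Finset.sum_add_distrib]
  refine Finset.sum_congr rfl fun k _ => ?_
  rw [show (x + y) k = x k + y k from rfl, R.ofTuple_add, add_mul]

lemma rowMulD_smul {n : ℕ} (t : ℕ) (u : Fin n → S) (a : K) (x : Fin n → Fin (t + 1) → K) :
    R.rowMulD t u (a • x) = R.ι a * R.rowMulD t u x := by
  rw [rowMulD, rowMulD, Finset.mul_sum]
  refine Finset.sum_congr rfl fun k _ => ?_
  rw [show (a • x) k = a • x k from rfl, R.ofTuple_smul, mul_assoc]

end DiffPolyRing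

set_option maxHeartbeats 2000000 in
set_option synthInstance.maxHeartbeats 400000 in
open DiffPolyRing Module in
/-- if `U·A = H` with `U` unimodular, `H` the Hermite form of the
full-row-rank matrix `A`, and `deg_D A_{ij} ≤ d`, then `deg_D U_{ij} ≤ (n-1)d`. -/
theorem degD_unimodular_multiplier_le
    {F : Type} [Field F] [CharZero F] {S : Type} [Ring S]
    (δ : RatFunc F → RatFunc F)
    (hδadd : ∀ a b : RatFunc F, δ (a + b) = δ a + δ b)
    (hδmul : ∀ a b : RatFunc F, δ (a * b) = a * δ b + δ a * b)
    (R : DiffPolyRing (RatFunc F) S δ) {n : ℕ}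
    (A U H : Matrix (Fin n) (Fin n) S) (d : ℕ)
    (hA : DiffPolyRing.FullRowRank A)
    (hdeg : ∀ i j, R.degD (A i j) ≤ (d : WithBot ℕ))
    (hU : IsUnit U) (hUA : U * A = H) (hH : R.HermiteForm H) :
    ∀ i j, R.degD (U i j) ≤ (((n - 1) * d : ℕ) : WithBot ℕ) := by
  classical
  intro i j
  by_contra hcon
  obtain ⟨hH1, hH2, hH3⟩ := hH
  obtain ⟨hUij, hme⟩ := R.lt_natDegD_of_not_le hcon
  set m : ℕ := (n - 1) * d with hmdef
  set s : ℕ := m + d with hsdef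
  set e : ℕ := R.natDegD (U i j) with hedef
  have hn : 0 < n := i.pos
  -- the inverse matrix
  obtain ⟨Uu, hUu⟩ := hU
  set V : Matrix (Fin n) (Fin n) S := (Uu⁻¹ : (Matrix (Fin n) (Fin n) S)ˣ).val with hVdef
  have hUV : U * V = 1 := by rw [← hUu, hVdef]; exact Uu.mul_inv
  have hVU : V * U = 1 := by rw [← hUu, hVdef]; exact Uu.inv_mul
  have hVH : V * H = A := by
    rw [← hUA, ← Matrix.mul_assoc, hVU, Matrix.one_mul]
  -- entrywise transfer identities
  have hgen : ∀ (W : Matrix (Fin n) (Fin n) S) (c : Fin n → S) (l : Fin n),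
      (∑ k, (∑ j', c j' * V j' k) * W k l) = ∑ j', c j' * (V * W) j' l := by
    intro W c l
    have h1 : ∀ k, (∑ j', c j' * V j' k) * W k l = ∑ j', c j' * (V j' k * W k l) := by
      intro k
      rw [Finset.sum_mul]
      exact Finset.sum_congr rfl fun j' _ => mul_assoc _ _ _
    calc (∑ k, (∑ j', c j' * V j' k) * W k l)
        = ∑ k, ∑ j', c j' * (V j' k * W k l) := Finset.sum_congr rfl fun k _ => h1 k
      _ = ∑ j', ∑ k, c j' * (V j' k * W k l) := Finset.sum_comm
      _ = ∑ j', c j' * ∑ k, V j' k * W k l :=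
          Finset.sum_congr rfl fun j' _ => (Finset.mul_sum _ _ _).symm
      _ = ∑ j', c j' * (V * W) j' l :=
          Finset.sum_congr rfl fun j' _ => by rw [Matrix.mul_apply]
  have hcVU : ∀ (c : Fin n → S) (l : Fin n),
      (∑ k, (∑ j', c j' * V j' k) * U k l) = c l := by
    intro c l
    rw [hgen U c l, hVU]
    rw [Finset.sum_congr rfl (fun j' (_ : j' ∈ Finset.univ) => by rw [Matrix.one_apply])]
    simp
  have hcVH : ∀ (c : Fin n → S) (l : Fin n),
      (∑ k, (∑ j', c j' * V j' k) * H k l) = ∑ j', c j' * A j' l := by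
    intro c l
    rw [hgen H c l, hVH]
  -- degree bound on the "b" vectors, via Hermite back-substitution
  have hdegb : ∀ (x : Fin n → Fin (m + 1) → RatFunc F) (k : Fin n),
      R.degD (R.rowMulD m (fun j' => V j' k) x) ≤ (s : WithBot ℕ) := by
    intro x
    refine R.hermite_back H hH1 hH2 hH3 _ s ?_
    intro l
    have hb : (∑ r, R.rowMulD m (fun j' => V j' r) x * H r l)
        = ∑ j', R.ofTuple m (x j') * A j' l := by
      have := hcVH (fun j' => R.ofTuple m (x j')) l
      simpa [rowMulD] using this
    rw [hb]
    rw [R.degD_le_iff]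
    intro r hr
    rw [R.coeff_sum]
    refine Finset.sum_eq_zero fun j' _ => ?_
    have hmul := (R.coeff_mul (R.ofTuple m (x j')) (A j' l) m d
      (R.degD_ofTuple m (x j')) (hdeg j' l)).1
    exact (R.degD_le_iff _ _).1 hmul r (by omega)
  have hΨwd : ∀ (x : Fin n → Fin (m + 1) → RatFunc F) (k : Fin n),
      R.ofTuple s (fun idx => R.coeff (R.rowMulD m (fun j' => V j' k) x) (idx : ℕ))
        = R.rowMulD m (fun j' => V j' k) x :=
    fun x k => R.ofTuple_coeff _ s (hdegb x k)
  -- the three linear maps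
  set Ψ : (Fin n → Fin (m + 1) → RatFunc F) →ₗ[RatFunc F] (Fin n → Fin (s + 1) → RatFunc F) :=
    { toFun := fun x k idx => R.coeff (R.rowMulD m (fun j' => V j' k) x) (idx : ℕ)
      map_add' := by
        intro x y
        funext k idx
        show R.coeff (R.rowMulD m (fun j' => V j' k) (x + y)) (idx : ℕ)
          = R.coeff (R.rowMulD m (fun j' => V j' k) x) (idx : ℕ)
            + R.coeff (R.rowMulD m (fun j' => V j' k) y) (idx : ℕ)
        rw [R.rowMulD_add, R.coeff_add]
      map_smul' := by
        intro a x
        funext k idx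
        show R.coeff (R.rowMulD m (fun j' => V j' k) (a • x)) (idx : ℕ)
          = a * R.coeff (R.rowMulD m (fun j' => V j' k) x) (idx : ℕ)
        rw [R.rowMulD_smul, R.coeff_smul] } with hΨdef
  set Θ : (Fin n → Fin (s + 1) → RatFunc F) →ₗ[RatFunc F] (Fin (d + e) → RatFunc F) :=
    { toFun := fun y r => R.coeff (R.rowMulD s (fun k => U k j) y) (m + 1 + (r : ℕ))
      map_add' := by
        intro x y
        funext r
        show R.coeff (R.rowMulD s (fun k => U k j) (x + y)) (m + 1 + (r : ℕ))
          = R.coeff (R.rowMulD s (fun k => U k j) x) (m + 1 + (r : ℕ))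
            + R.coeff (R.rowMulD s (fun k => U k j) y) (m + 1 + (r : ℕ))
        rw [R.rowMulD_add, R.coeff_add]
      map_smul' := by
        intro a x
        funext r
        show R.coeff (R.rowMulD s (fun k => U k j) (a • x)) (m + 1 + (r : ℕ))
          = a * R.coeff (R.rowMulD s (fun k => U k j) x) (m + 1 + (r : ℕ))
        rw [R.rowMulD_smul, R.coeff_smul] } with hΘdef
  set L : (Fin (s + 1) → RatFunc F) →ₗ[RatFunc F] (Fin n → Fin (s + 1) → RatFunc F) :=
    { toFun := fun p k => if k = i then p else 0
      map_add' := by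
        intro p q
        funext k idx
        by_cases h : k = i <;> simp [h]
      map_smul' := by
        intro a p
        funext k idx
        by_cases h : k = i <;> simp [h] } with hLdef
  -- Θ vanishes on the range of Ψ
  have hrowΨ : ∀ (x : Fin n → Fin (m + 1) → RatFunc F),
      R.rowMulD s (fun k => U k j) (Ψ x) = R.ofTuple m (x j) := by
    intro x
    have h1 : R.rowMulD s (fun k => U k j) (Ψ x)
        = ∑ k, R.rowMulD m (fun j' => V j' k) x * U k j := by
      rw [rowMulD]
      refine Finset.sum_congr rfl fun k _ => ?_
      rw [hΨdef]
      simp only [LinearMap.coe_mk, AddHom.coe_mk]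
      rw [hΨwd x k]
    rw [h1]
    have h2 := hcVU (fun j' => R.ofTuple m (x j')) j
    simpa [rowMulD] using h2
  have hΘΨ : ∀ x, Θ (Ψ x) = 0 := by
    intro x
    funext r
    rw [hΘdef]
    simp only [LinearMap.coe_mk, AddHom.coe_mk]
    show R.coeff (R.rowMulD s (fun k => U k j) (Ψ x)) (m + 1 + (r : ℕ)) = 0
    rw [hrowΨ x]
    exact (R.degD_le_iff _ _).1 (R.degD_ofTuple m (x j)) _ (by omega)
  -- Ψ is injective
  have hΨinj : Function.Injective Ψ := by
    intro x y hxy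
    have hbk : ∀ k, R.rowMulD m (fun j' => V j' k) x = R.rowMulD m (fun j' => V j' k) y := by
      intro k
      rw [← hΨwd x k, ← hΨwd y k]
      have := congrFun hxy k
      rw [hΨdef] at this
      simp only [LinearMap.coe_mk, AddHom.coe_mk] at this
      rw [show (fun idx : Fin (s+1) => R.coeff (R.rowMulD m (fun j' => V j' k) x) (idx : ℕ))
        = (fun idx : Fin (s+1) => R.coeff (R.rowMulD m (fun j' => V j' k) y) (idx : ℕ)) from this]
    have hc : ∀ l, R.ofTuple m (x l) = R.ofTuple m (y l) := by
      intro l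
      have hx := hcVU (fun j' => R.ofTuple m (x j')) l
      have hy := hcVU (fun j' => R.ofTuple m (y j')) l
      rw [← hx, ← hy]
      refine Finset.sum_congr rfl fun k _ => ?_
      have := hbk k
      rw [rowMulD, rowMulD] at this
      rw [this]
    funext l idx
    have h1 := congrArg (fun f => R.coeff f (idx : ℕ)) (hc l)
    simp only [R.coeff_ofTuple] at h1
    rw [dif_pos idx.isLt, dif_pos idx.isLt] at h1
    simpa using h1
  -- L is injective
  have hLinj : Function.Injective L := by
    intro p q hpq
    have := congrFun hpq i
    rw [hLdef] at this
    simp only [LinearMap.coe_mk, AddHom.coe_mk] at this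
    simpa using this
  -- Θ is nonzero on nonzero elements of the range of L
  have hrowL : ∀ (p : Fin (s + 1) → RatFunc F),
      R.rowMulD s (fun k => U k j) (L p) = R.ofTuple s p * U i j := by
    intro p
    rw [rowMulD]
    rw [Finset.sum_eq_single i ?_ (fun hnot => absurd (Finset.mem_univ _) hnot)]
    · rw [hLdef]
      simp only [LinearMap.coe_mk, AddHom.coe_mk]
      simp
    · intro k _ hk
      rw [hLdef]
      simp only [LinearMap.coe_mk, AddHom.coe_mk]
      show R.ofTuple s (if k = i then p else 0) * U k j = 0
      rw [if_neg hk, R.ofTuple_zero, zero_mul]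
  have hΘL : ∀ p, p ≠ 0 → Θ (L p) ≠ 0 := by
    intro p hp
    set q : S := R.ofTuple s p with hqdef
    have hq : q ≠ 0 := by
      intro h0
      obtain ⟨idx, hidx⟩ := Function.ne_iff.1 hp
      apply hidx
      have h1 := congrArg (fun f => R.coeff f (idx : ℕ)) h0
      rw [hqdef] at h1
      simp only [R.coeff_ofTuple, R.coeff_zero, dif_pos idx.isLt] at h1
      simpa using h1
    set a : ℕ := R.natDegD q with hadef
    have ha : a ≤ s := R.natDegD_le_of_degD_le (R.degD_ofTuple s p) hq
    have htop : R.coeff (q * U i j) (a + e) ≠ 0 := by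
      have := R.top_coeff_mul_ne_zero hq hUij
      rwa [← hadef, ← hedef] at this
    intro h0
    apply htop
    have hr0 : a + e - (m + 1) < d + e := by omega
    have h1 := congrFun h0 (⟨a + e - (m + 1), hr0⟩ : Fin (d + e))
    rw [hΘdef] at h1
    simp only [LinearMap.coe_mk, AddHom.coe_mk] at h1
    simp only [Pi.zero_apply] at h1
    have h2 : m + 1 + (a + e - (m + 1)) = a + e := by omega
    rw [h2, hrowL p, ← hqdef] at h1
    exact h1
  -- dimension count
  set p₁ := LinearMap.range Ψ with hp₁
  set p₂ := LinearMap.range L with hp₂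
  have hdisj : p₁ ⊓ p₂ = ⊥ := by
    rw [Submodule.eq_bot_iff]
    intro y hy
    obtain ⟨hy1, hy2⟩ := Submodule.mem_inf.1 hy
    obtain ⟨x, hx⟩ := hy1
    obtain ⟨p, hp⟩ := hy2
    by_cases hp0 : p = 0
    · rw [← hp, hp0, map_zero]
    · exfalso
      apply hΘL p hp0
      rw [hp, ← hx]
      exact hΘΨ x
  have hfr : ∀ t : ℕ, finrank (RatFunc F) (Fin n → Fin (t + 1) → RatFunc F) = n * (t + 1) := by
    intro t
    rw [Module.finrank_pi_fintype]
    simp [Module.finrank_fintype_fun_eq_card, Finset.sum_const, Finset.card_univ]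
  have hr1 : finrank (RatFunc F) p₁ = n * (m + 1) := by
    rw [hp₁, LinearMap.finrank_range_of_inj hΨinj, hfr m]
  have hr2 : finrank (RatFunc F) p₂ = s + 1 := by
    rw [hp₂, LinearMap.finrank_range_of_inj hLinj]
    simp [Module.finrank_fintype_fun_eq_card]
  have hsum := Submodule.finrank_sup_add_finrank_inf_eq p₁ p₂
  rw [hdisj, finrank_bot, hr1, hr2, add_zero] at hsum
  have hle : finrank (RatFunc F) (p₁ ⊔ p₂ : Submodule (RatFunc F) _) ≤ n * (s + 1) := by
    rw [← hfr s]
    exact Submodule.finrank_le _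
  have h1 : n * (m + 1) + (s + 1) ≤ n * (s + 1) := by omega
  have h2 : n * (s + 1) = n * (m + 1) + n * d := by
    rw [show s + 1 = (m + 1) + d from by omega, mul_add]
  have h3 : s + 1 ≤ n * d := by omega
  obtain ⟨n', rfl⟩ : ∃ n', n = n' + 1 := ⟨n - 1, by omega⟩
  have hm' : m = n' * d := by rw [hmdef, Nat.add_sub_cancel]
  have h4 : (n' + 1) * d = n' * d + d := by rw [add_mul, one_mul]
  omega
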